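/- For n ≥ 1, let K_{3n} be the complete graph on 3n vertices with κ(v) = 2 for all v. Then every subset S of the vertices with n ≤ |S| ≤ 3n − 2 is the D-set of some DP-Nash subgraph of (K_{3n}, κ). -/

import Mathlib

open Finset
open scoped Classical

noncomputable section

variable {V : Type*} [Fintype V]

/-- Degree of a vertex in a (simple) graph on a finite vertex set. -/
def deg (H : SimpleGraph V) (x : V) : ℕ :=
  (Finset.univ.filter fun y => H.Adj x y).card

/-- `(D, P; H)` is a DP-Nash subgraph of the capacitated graph `(G, κ)`:
`H` is a spanning subgraph of `G`, bipartite with partite sets `D` and `P`,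
no vertex of `P` is isolated in `H`, and every `x ∈ D` has
`H`-degree `min (d_G x) (κ x)`. -/
def IsDPNash (G : SimpleGraph V) (κ : V → ℕ) (D P : Finset V) (H : SimpleGraph V) : Prop :=
  H ≤ G ∧ D ∪ P = Finset.univ ∧ Disjoint D P ∧
    (∀ ⦃u v⦄, H.Adj u v → (u ∈ D ∧ v ∈ P) ∨ (u ∈ P ∧ v ∈ D)) ∧
    (∀ v ∈ P, 0 < deg H v) ∧
    (∀ x ∈ D, deg H x = min (deg G x) (κ x))

/-- `X = {x : κ(x) = d_G(x)}`. -/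
def XX (G : SimpleGraph V) (κ : V → ℕ) : Finset V :=
  Finset.univ.filter fun x => κ x = deg G x

/-- `Y = N(X) \ X`. -/
def YY (G : SimpleGraph V) (κ : V → ℕ) : Finset V :=
  Finset.univ.filter fun y => y ∉ XX G κ ∧ ∃ x ∈ XX G κ, G.Adj x y

/-- `Z = V \ (X ∪ Y)`. -/
def ZZ (G : SimpleGraph V) (κ : V → ℕ) : Finset V :=
  Finset.univ \ (XX G κ ∪ YY G κ)

/-- `Y^{κ>0} = {y ∈ Y : κ(y) > 0}`. -/
def Ypos (G : SimpleGraph V) (κ : V → ℕ) : Finset V :=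
  (YY G κ).filter fun y => 0 < κ y

/-- The neighbours of `x` in `G` lying in `W`. -/
def nbrW (G : SimpleGraph V) (x : V) (W : Finset V) : Finset V :=
  Finset.univ.filter fun y => G.Adj x y ∧ y ∈ W

/-- `L(W) = {x ∈ X ∪ Z : |N_G(x) ∩ W| > d_G(x) - κ(x)}`. -/
def LL (G : SimpleGraph V) (κ : V → ℕ) (W : Finset V) : Finset V :=
  (XX G κ ∪ ZZ G κ).filter fun x => deg G x - κ x < (nbrW G x W).card

/-- In the complete graph `K_{3n}` with all capacities `2`, every vertex set
`S` with `n ≤ |S| ≤ 3n - 2` is the `D`-set of some DP-Nash subgraph. -/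
theorem stmt18 (n : ℕ) (hn : 1 ≤ n) (S : Finset (Fin (3 * n)))
    (h1 : n ≤ S.card) (h2 : S.card ≤ 3 * n - 2) :
    ∃ (P : Finset (Fin (3 * n))) (H : SimpleGraph (Fin (3 * n))),
      IsDPNash (⊤ : SimpleGraph (Fin (3 * n))) (fun _ => 2) S P H := by
  set P : Finset (Fin (3 * n)) := Sᶜ with hPdef
  have hSle : S.card ≤ 3 * n := by
    simpa using Finset.card_le_univ S
  have hcard : S.card + P.card = 3 * n := by
    rw [hPdef, Finset.card_compl, Fintype.card_fin]
    omega
  have hp2 : 2 ≤ P.card := by omega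
  have hp0 : 0 < P.card := by omega
  have hple : P.card ≤ 2 * S.card := by omega
  -- the k-th vertex of P (cyclically)
  let pv : ℕ → Fin (3 * n) := fun k =>
    ((P.equivFin.symm ⟨k % P.card, Nat.mod_lt _ hp0⟩ : P) : Fin (3 * n))
  have pv_mem : ∀ k, pv k ∈ P := fun k => (P.equivFin.symm _).2
  have pv_inj : ∀ k k', pv k = pv k' → k % P.card = k' % P.card := by
    intro k k' h
    have h3 := P.equivFin.symm.injective (Subtype.coe_injective h)
    exact congrArg Fin.val h3
  -- index of a vertex in S
  let idx : Fin (3 * n) → ℕ := fun u => if h : u ∈ S then (S.equivFin ⟨u, h⟩ : ℕ) else 0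
  let A : Fin (3 * n) → Fin (3 * n) → Prop := fun u v =>
    (u ∈ S ∧ (v = pv (2 * idx u) ∨ v = pv (2 * idx u + 1))) ∨
    (v ∈ S ∧ (u = pv (2 * idx v) ∨ u = pv (2 * idx v + 1)))
  have hSP : ∀ u, u ∈ S → u ∉ P := by
    intro u hu
    simp [hPdef, hu]
  have hsymm : Symmetric A := by
    intro u v h
    exact h.elim Or.inr Or.inl
  have hirr : Irreflexive A := by
    intro u h
    rcases h with ⟨hu, hv⟩ | ⟨hu, hv⟩ <;>
      exact hSP u hu (by rcases hv with h | h <;> (rw [h]; exact pv_mem _))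
  let H : SimpleGraph (Fin (3 * n)) := ⟨A, ⟨fun a b h => hsymm h⟩, ⟨hirr⟩⟩
  -- the two pv-values are distinct
  have pv_ne : ∀ i, pv (2 * i) ≠ pv (2 * i + 1) := by
    intro i h
    have hmod := pv_inj _ _ h
    have hdvd : P.card ∣ (2 * i + 1) - (2 * i) :=
      (Nat.modEq_iff_dvd' (by omega)).mp hmod
    simp at hdvd
    omega
  -- neighbor set of u ∈ S
  have hnbr : ∀ u, u ∈ S →
      (Finset.univ.filter fun y => H.Adj u y) = {pv (2 * idx u), pv (2 * idx u + 1)} := by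
    intro u hu
    ext v
    simp only [Finset.mem_filter, Finset.mem_univ, true_and, Finset.mem_insert,
      Finset.mem_singleton]
    constructor
    · intro h
      rcases h with ⟨_, hv⟩ | ⟨hv, hv2⟩
      · exact hv
      · exfalso
        exact hSP u hu (by rcases hv2 with h | h <;> (rw [h]; exact pv_mem _))
    · intro h
      exact Or.inl ⟨hu, h⟩
  -- degree in G = ⊤
  have hdegG : ∀ x : Fin (3 * n), deg (⊤ : SimpleGraph (Fin (3 * n))) x = 3 * n - 1 := by
    intro x
    unfold deg
    rw [Finset.filter_congr_decidable]
    have hfe : (Finset.univ.filter fun y => (⊤ : SimpleGraph (Fin (3 * n))).Adj x y)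
        = Finset.univ.erase x := by
      ext y
      simp [SimpleGraph.top_adj, eq_comm, ne_comm]
    rw [hfe, Finset.card_erase_of_mem (Finset.mem_univ x)]
    simp
  have hunion : @Union.union _ (@Finset.instUnion _ (fun a b => Classical.propDecidable (a = b))) S P = Finset.univ := by
    ext x
    rw [@Finset.mem_union _ (fun a b => Classical.propDecidable (a = b)), hPdef]
    by_cases h : x ∈ S <;> simp [h]
  have hdisj : Disjoint S P := by
    rw [Finset.disjoint_left]
    intro a ha hb
    rw [hPdef, Finset.mem_compl] at hb
    exact hb ha
  refine ⟨P, H, le_top, hunion, hdisj, ?_, ?_, ?_⟩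
  · -- bipartite
    intro u v huv
    rcases huv with ⟨hu, hv⟩ | ⟨hv, hu⟩
    · exact Or.inl ⟨hu, by rcases hv with h | h <;> (rw [h]; exact pv_mem _)⟩
    · exact Or.inr ⟨by rcases hu with h | h <;> (rw [h]; exact pv_mem _), hv⟩
  · -- no isolated P vertices
    intro v hv
    unfold deg
    rw [Finset.filter_congr_decidable, Finset.card_pos]
    set j : ℕ := (P.equivFin ⟨v, hv⟩ : ℕ) with hjdef
    have hj : j < P.card := (P.equivFin ⟨v, hv⟩).2
    have h4 : (⟨j % P.card, Nat.mod_lt _ hp0⟩ : Fin P.card) = P.equivFin ⟨v, hv⟩ := by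
      apply Fin.ext
      show j % P.card = ((P.equivFin ⟨v, hv⟩ : Fin P.card) : ℕ)
      rw [← hjdef]
      exact Nat.mod_eq_of_lt hj
    have hvj : v = pv j := by
      show v = ((P.equivFin.symm ⟨j % P.card, Nat.mod_lt _ hp0⟩ : P) : Fin (3 * n))
      rw [h4, Equiv.symm_apply_apply]
    have hlt : j / 2 < S.card := Nat.div_lt_of_lt_mul (lt_of_lt_of_le hj hple)
    set u : Fin (3 * n) := ((S.equivFin.symm ⟨j / 2, hlt⟩ : S) : Fin (3 * n)) with hudef
    have hu : u ∈ S := (S.equivFin.symm _).2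
    have hidx : idx u = j / 2 := by
      show (if h : u ∈ S then (S.equivFin ⟨u, h⟩ : ℕ) else 0) = j / 2
      rw [dif_pos hu]
      have huu : (⟨u, hu⟩ : S) = S.equivFin.symm ⟨j / 2, hlt⟩ := Subtype.ext hudef
      rw [huu, Equiv.apply_symm_apply]
    refine ⟨u, ?_⟩
    simp only [Finset.mem_filter, Finset.mem_univ, true_and]
    show A v u
    refine Or.inr ⟨hu, ?_⟩
    rw [hidx]
    rcases Nat.even_or_odd j with he | ho
    · left
      rw [hvj]
      congr 1
      rcases he with ⟨m, hm⟩
      omega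
    · right
      rw [hvj]
      congr 1
      rcases ho with ⟨m, hm⟩
      omega
  · -- degrees in S
    intro x hx
    have h3 : min (deg (⊤ : SimpleGraph (Fin (3 * n))) x) 2 = 2 := by
      rw [hdegG x]
      omega
    rw [h3]
    unfold deg
    rw [Finset.filter_congr_decidable, hnbr x hx, Finset.card_insert_of_notMem (by simp [pv_ne (idx x)]),
      Finset.card_singleton]
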